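/- Let X ⊂ ℝ^{d̂₀×τ} be a finite set. For every function h: X → {1,…,K+1} there exist a finite depth l, a transformer Ĥ ∈ H_Trans^{(l,m)} with block budget m = (d̂₀, 2, 1, 1, 4) (two heads, head dimension 1, value dimension 1, feed-forward width 4, hidden dimension d̂₀), and a classifier readout f such that the maximum-value classifier exactly realizes h, i.e., argmax_{k∈{1,…,K+1}} (f ∘ Ĥ(x))_k = h(x) for every x ∈ X. -/

import Mathlib

open MeasureTheory Matrix

/-- Matrices in `ℝ^{a×b}`. -/
abbrev Mat (a b : ℕ) : Type := Matrix (Fin a) (Fin b) ℝ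

/-- Column-wise softmax. -/
noncomputable def colSoftmax {n t : ℕ} (M : Matrix (Fin n) (Fin t) ℝ) :
    Matrix (Fin n) (Fin t) ℝ :=
  Matrix.of fun i j => Real.exp (M i j) / ∑ k, Real.exp (M k j)

/-- Budget `m = (d̂, h, m_h, m_V, r)` of a transformer block. -/
structure Budget where
  dh : ℕ
  heads : ℕ
  mh : ℕ
  mV : ℕ
  r : ℕ

/-- Componentwise scalar multiplication of a budget. -/
def Budget.smul (c : ℕ) (m : Budget) : Budget :=
  ⟨c * m.dh, c * m.heads, c * m.mh, c * m.mV, c * m.r⟩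

/-- Multi-head softmax self-attention layer. -/
noncomputable def attLayer {dh t heads mh mV : ℕ}
    (WO : Fin heads → Matrix (Fin dh) (Fin mV) ℝ)
    (WV : Fin heads → Matrix (Fin mV) (Fin dh) ℝ)
    (WK WQ : Fin heads → Matrix (Fin mh) (Fin dh) ℝ)
    (H : Mat dh t) : Mat dh t :=
  H + ∑ i, WO i * WV i * H * colSoftmax ((WK i * H)ᵀ * (WQ i * H))

/-- Feed-forward layer with ReLU activation. -/
noncomputable def ffLayer {dh t r : ℕ}
    (W1 : Matrix (Fin r) (Fin dh) ℝ) (W2 : Matrix (Fin dh) (Fin r) ℝ)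
    (b1 : Fin r → ℝ) (b2 : Fin dh → ℝ) (H : Mat dh t) : Mat dh t :=
  H + W2 * Matrix.of (fun i j => max 0 ((W1 * H) i j + b1 i)) +
    Matrix.of fun i _ => b2 i

/-- `f` is a transformer block `FF ∘ Att` with budget `m`. -/
def IsBlock (m : Budget) (t : ℕ) (f : Mat m.dh t → Mat m.dh t) : Prop :=
  ∃ (WO : Fin m.heads → Matrix (Fin m.dh) (Fin m.mV) ℝ)
    (WV : Fin m.heads → Matrix (Fin m.mV) (Fin m.dh) ℝ)
    (WK WQ : Fin m.heads → Matrix (Fin m.mh) (Fin m.dh) ℝ)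
    (W1 : Matrix (Fin m.r) (Fin m.dh) ℝ) (W2 : Matrix (Fin m.dh) (Fin m.r) ℝ)
    (b1 : Fin m.r → ℝ) (b2 : Fin m.dh → ℝ),
    f = fun H => ffLayer W1 W2 b1 b2 (attLayer WO WV WK WQ H)

/-- One-layer affine (fully connected) map. -/
def IsAffineMap' {A B : Type*} [AddCommGroup A] [Module ℝ A] [AddCommGroup B] [Module ℝ B]
    (f : A → B) : Prop :=
  ∃ (L : A →ₗ[ℝ] B) (b : B), f = fun x => L x + b

/-- Composition of `l` functions (last one applied last). -/
def iterComp {α : Type*} : (l : ℕ) → (Fin l → α → α) → α → α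
  | 0, _ => id
  | l + 1, g => g (Fin.last l) ∘ iterComp l fun i => g i.castSucc

/-- Transformer hypothesis space `H_Trans^{(l,m)}`: composites of `l` blocks of budget `m`
after a one-layer affine embedding. -/
def HTrans (d0 t : ℕ) (l : ℕ) (m : Budget) : Set (Mat d0 t → Mat m.dh t) :=
  { Hhat | ∃ (blocks : Fin l → (Mat m.dh t → Mat m.dh t)) (F : Mat d0 t → Mat m.dh t),
      (∀ i, IsBlock m t (blocks i)) ∧ IsAffineMap' F ∧ Hhat = iterComp l blocks ∘ F }

/-- The budget `(K+1)·(2τ(2τd̂₀+1), 1, 1, τ(2τd̂₀+1), 2τ(2τd̂₀+1))`. -/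
def bigBudget (d0 t K : ℕ) : Budget :=
  Budget.smul (K + 1)
    ⟨2 * t * (2 * t * d0 + 1), 1, 1, t * (2 * t * d0 + 1), 2 * t * (2 * t * d0 + 1)⟩

/-- The classifier readout `f^k(H) = W_{4,k}(W_{3,k}H + b_{3,k})ᵀ + b_{4,k}`. -/
noncomputable def readout {dh t : ℕ} (W3 : Fin dh → ℝ) (W4 b3 : Fin t → ℝ) (b4 : ℝ)
    (H : Mat dh t) : ℝ :=
  (∑ j, W4 j * ((∑ i, W3 i * H i j) + b3 j)) + b4

/-- `f : ℝ^{d̂×τ} → ℝ^{K+1}` is a classifier readout. -/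
def IsReadout {dh t K : ℕ} (f : Mat dh t → (Fin (K + 1) → ℝ)) : Prop :=
  ∃ (W3 : Fin (K + 1) → Fin dh → ℝ) (W4 b3 : Fin (K + 1) → Fin t → ℝ)
    (b4 : Fin (K + 1) → ℝ),
    f = fun H k => readout (W3 k) (W4 k) (b3 k) (b4 k) H


/-! ### Auxiliary material for the proof -/

/-- Evaluation at an entry, as a linear map. -/
def evEntry {a b : ℕ} (i : Fin a) (j : Fin b) : Mat a b →ₗ[ℝ] ℝ where
  toFun x := x i j
  map_add' _ _ := rfl
  map_smul' _ _ := rfl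

lemma exists_sep_functional {a b : ℕ} (D : Finset (Mat a b)) (hD : (0 : Mat a b) ∉ D) :
    ∃ φ : Mat a b →ₗ[ℝ] ℝ, ∀ d ∈ D, φ d ≠ 0 := by
  classical
  induction D using Finset.induction_on with
  | empty => exact ⟨0, by simp⟩
  | insert d s hnot ih =>
    have hd0 : d ≠ 0 := by rintro rfl; exact hD (Finset.mem_insert_self _ _)
    have h0s : (0 : Mat a b) ∉ s := fun hm => hD (Finset.mem_insert_of_mem hm)
    obtain ⟨φ, hφ⟩ := ih h0s
    have : ∃ i j, d i j ≠ 0 := by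
      by_contra hc
      push_neg at hc
      exact hd0 (by ext i j; exact hc i j)
    obtain ⟨i, j, hij⟩ := this
    set ψ := evEntry i j with hψdef
    have hψd : ψ d ≠ 0 := hij
    obtain ⟨ε, hε⟩ := Infinite.exists_notMem_finset
      (insert (0:ℝ) ((insert d s).image fun e => -φ e / ψ e))
    have hε0 : ε ≠ 0 := fun hh => hε (by simp [hh])
    refine ⟨φ + ε • ψ, ?_⟩
    intro e he
    simp only [LinearMap.add_apply, LinearMap.smul_apply, smul_eq_mul]
    by_cases hψe : ψ e = 0
    · have hes : e ∈ s := by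
        rcases Finset.mem_insert.mp he with rfl | hs
        · exact absurd hψe hψd
        · exact hs
      simpa [hψe] using hφ e hes
    · intro hzero
      have : ε = -φ e / ψ e := by field_simp at hzero ⊢; linarith
      exact hε (by
        apply Finset.mem_insert_of_mem
        exact Finset.mem_image.mpr ⟨e, he, this.symm⟩)

/-- The scalar action of one of our blocks on the tracked entry. -/
noncomputable def glayer (a b w : ℝ) : ℝ :=
  w + (b - a) * (max 0 (w - (a - 1)) - 2 * max 0 (w - a) + max 0 (w - (a + 1)))

lemma glayer_self (a b : ℝ) : glayer a b a = b := by
  unfold glayer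
  rw [show a - (a - 1) = (1:ℝ) by ring, show a - a = (0:ℝ) by ring,
    show a - (a + 1) = (-1:ℝ) by ring]
  norm_num

lemma glayer_fix (a b w : ℝ) (hw : w ≤ a - 1 ∨ a + 1 ≤ w) : glayer a b w = w := by
  unfold glayer
  rcases hw with hw | hw
  · rw [max_eq_left (by linarith), max_eq_left (by linarith), max_eq_left (by linarith)]
    ring
  · rw [max_eq_right (by linarith), max_eq_right (by linarith), max_eq_right (by linarith)]
    ring

lemma iterComp_glayer_fix : ∀ (n : ℕ) (u v : Fin n → ℝ) (w : ℝ),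
    (∀ i, w ≤ u i - 1 ∨ u i + 1 ≤ w) →
    iterComp n (fun i => glayer (u i) (v i)) w = w := by
  intro n
  induction n with
  | zero => intro u v w _; rfl
  | succ n ih =>
    intro u v w hw
    show glayer (u (Fin.last n)) (v (Fin.last n))
      (iterComp n (fun i => glayer (u i.castSucc) (v i.castSucc)) w) = w
    rw [ih (fun i => u i.castSucc) (fun i => v i.castSucc) w (fun i => hw i.castSucc)]
    exact glayer_fix _ _ _ (hw (Fin.last n))

lemma iterComp_glayer_hits : ∀ (n : ℕ) (u v : Fin n → ℝ),
    (∀ i j, i ≠ j → 2 ≤ |u i - u j|) → (∀ i j, v i + 2 ≤ u j) →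
    ∀ j, iterComp n (fun i => glayer (u i) (v i)) (u j) = v j := by
  intro n
  induction n with
  | zero => intro u v _ _ j; exact j.elim0
  | succ n ih =>
    intro u v hgap hlow j
    induction j using Fin.lastCases with
    | last =>
      show glayer (u (Fin.last n)) (v (Fin.last n))
        (iterComp n (fun i => glayer (u i.castSucc) (v i.castSucc)) (u (Fin.last n)))
        = v (Fin.last n)
      rw [iterComp_glayer_fix n (fun i => u i.castSucc) (fun i => v i.castSucc)
        (u (Fin.last n)) ?_]
      · exact glayer_self _ _
      · intro i
        have hne : Fin.last n ≠ i.castSucc := (Fin.castSucc_lt_last i).ne'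
        have := hgap _ _ hne
        rcases abs_cases (u (Fin.last n) - u i.castSucc) with ⟨he, _⟩ | ⟨he, _⟩ <;>
          [right; left] <;> linarith
    | cast j' =>
      show glayer (u (Fin.last n)) (v (Fin.last n))
        (iterComp n (fun i => glayer (u i.castSucc) (v i.castSucc)) (u j'.castSucc))
        = v j'.castSucc
      rw [ih (fun i => u i.castSucc) (fun i => v i.castSucc)
        (fun i j hij => hgap _ _ (fun hh => hij (Fin.castSucc_injective n hh)))
        (fun i j => hlow _ _) j']
      exact glayer_fix _ _ _ (Or.inl (by have := hlow j'.castSucc (Fin.last n); linarith))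

section BlockConstruction
variable {d0 t : ℕ}

lemma attLayer_zero {heads mh mV : ℕ} (H : Mat d0 t) :
    attLayer (heads := heads) (mh := mh) (mV := mV)
      (fun _ => 0) (fun _ => 0) (fun _ => 0) (fun _ => 0) H = H := by
  simp [attLayer]

noncomputable def myW1 (i0 : Fin d0) : Matrix (Fin 4) (Fin d0) ℝ :=
  Matrix.of fun p q => if q = i0 then (![1, 1, 1, 0] : Fin 4 → ℝ) p else 0

noncomputable def myW2 (i0 : Fin d0) (a b : ℝ) : Matrix (Fin d0) (Fin 4) ℝ :=
  Matrix.of fun i p => if i = i0 then (![b - a, -2 * (b - a), b - a, 0] : Fin 4 → ℝ) p else 0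

noncomputable def myb1 (a : ℝ) : Fin 4 → ℝ := ![1 - a, -a, -1 - a, 0]

noncomputable def myBlock (i0 : Fin d0) (a b : ℝ) (H : Mat d0 t) : Mat d0 t :=
  ffLayer (myW1 i0) (myW2 i0 a b) (myb1 a) 0
    (attLayer (heads := 2) (mh := 1) (mV := 1)
      (fun _ => 0) (fun _ => 0) (fun _ => 0) (fun _ => 0) H)

lemma myBlock_entry (i0 : Fin d0) (j0 : Fin t) (a b : ℝ) (H : Mat d0 t) :
    myBlock i0 a b H i0 j0 = glayer a b (H i0 j0) := by
  unfold myBlock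
  rw [attLayer_zero]
  set w := H i0 j0 with hw
  have hW1 : ∀ p : Fin 4, (myW1 i0 * H) p j0 = (![1, 1, 1, 0] : Fin 4 → ℝ) p * w := by
    intro p
    simp [myW1, Matrix.mul_apply, ite_mul, Finset.sum_ite_eq', hw]
  show H i0 j0 + (myW2 i0 a b * Matrix.of
      (fun p j => max 0 ((myW1 i0 * H) p j + myb1 a p))) i0 j0 + _ = _
  have : (myW2 i0 a b * Matrix.of
      (fun p j => max 0 ((myW1 i0 * H) p j + myb1 a p))) i0 j0
      = ∑ p : Fin 4, (![b - a, -2 * (b - a), b - a, 0] : Fin 4 → ℝ) p *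
          max 0 ((![1, 1, 1, 0] : Fin 4 → ℝ) p * w + myb1 a p) := by
    rw [Matrix.mul_apply]
    refine Finset.sum_congr rfl fun p _ => ?_
    simp only [Matrix.of_apply]
    rw [hW1 p]
    simp [myW2]
  rw [this]
  rw [Fin.sum_univ_four]
  simp only [myb1, Matrix.cons_val]
  norm_num [glayer]
  rw [show w + (1 - a) = w - (a - 1) by ring, show w + -a = w - a by ring,
    show w + (-1 - a) = w - (a + 1) by ring]
  ring

lemma iterComp_entry (i0 : Fin d0) (j0 : Fin t) :
    ∀ (n : ℕ) (B : Fin n → Mat d0 t → Mat d0 t) (g : Fin n → ℝ → ℝ),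
    (∀ i H, (B i H) i0 j0 = g i (H i0 j0)) →
    ∀ H, (iterComp n B H) i0 j0 = iterComp n g (H i0 j0) := by
  intro n
  induction n with
  | zero => intro B g _ H; rfl
  | succ n ih =>
    intro B g hBg H
    show (B (Fin.last n) (iterComp n (fun i => B i.castSucc) H)) i0 j0 = _
    rw [hBg, ih (fun i => B i.castSucc) (fun i => g i.castSucc) (fun i => hBg i.castSucc)]
    rfl

lemma readout_eval (i0 : Fin d0) (j0 : Fin t) (c b4 : ℝ) (H : Mat d0 t) :
    readout (fun i => if i = i0 then 1 else 0) (fun j => if j = j0 then c else 0)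
      0 b4 H = c * H i0 j0 + b4 := by
  unfold readout
  simp [ite_mul, one_mul, Finset.sum_ite_eq']

end BlockConstruction

/-- fixed-width, growing-depth exact realization: for finite
`X ⊂ ℝ^{d̂₀×τ}` (with `τ ≥ K+1`), every `h : X → {1,…,K+1}` is realized as the (strict)
argmax of `f ∘ Ĥ` for some finite depth `l`, some `Ĥ ∈ H_Trans^{(l,m)}` with block budget
`m = (d̂₀, 2, 1, 1, 4)`, and some classifier readout `f`. -/
theorem statement13 (d0 t K : ℕ) (hd0 : 0 < d0) (ht : K + 1 ≤ t)
    (X : Set (Mat d0 t)) (hX : X.Finite)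
    (h : Mat d0 t → Fin (K + 1)) :
    ∃ (l : ℕ), ∃ Hhat ∈ HTrans d0 t l ⟨d0, 2, 1, 1, 4⟩,
      ∃ f : Mat d0 t → (Fin (K + 1) → ℝ), IsReadout f ∧
        ∀ x ∈ X, ∀ k : Fin (K + 1), k ≠ h x → f (Hhat x) k < f (Hhat x) (h x) := by
  classical
  set S : Finset (Mat d0 t) := hX.toFinset with hS
  -- a linear functional injective on X
  set D : Finset (Mat d0 t) := ((S ×ˢ S).image fun p => p.1 - p.2).erase 0 with hD
  obtain ⟨φ, hφ⟩ := exists_sep_functional D (Finset.notMem_erase _ _)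
  have hsep : ∀ x ∈ S, ∀ y ∈ S, x ≠ y → φ x ≠ φ y := by
    intro x hx y hy hxy
    have hmem : x - y ∈ D := by
      refine Finset.mem_erase.mpr ⟨sub_ne_zero.mpr hxy, ?_⟩
      exact Finset.mem_image.mpr ⟨(x, y), Finset.mem_product.mpr ⟨hx, hy⟩, rfl⟩
    have hne := hφ _ hmem
    rw [map_sub] at hne
    exact fun he => hne (by rw [he, sub_self])
  -- choose the scale `a`
  set T : Finset ℝ := insert 1
    (((S ×ˢ S).filter fun p => p.1 ≠ p.2).image fun p => 2 / |φ p.1 - φ p.2|) with hT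
  set a : ℝ := T.max' ⟨1, Finset.mem_insert_self _ _⟩ with ha
  have ha1 : (1:ℝ) ≤ a := Finset.le_max' _ _ (Finset.mem_insert_self _ _)
  have ha0 : (0:ℝ) < a := lt_of_lt_of_le one_pos ha1
  have hagap : ∀ x ∈ S, ∀ y ∈ S, x ≠ y → 2 ≤ a * |φ x - φ y| := by
    intro x hx y hy hxy
    have hg0 : (0:ℝ) < |φ x - φ y| :=
      abs_pos.mpr (sub_ne_zero.mpr (hsep x hx y hy hxy))
    have hle : 2 / |φ x - φ y| ≤ a := by
      refine Finset.le_max' _ _ (Finset.mem_insert_of_mem ?_)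
      exact Finset.mem_image.mpr ⟨(x, y),
        Finset.mem_filter.mpr ⟨Finset.mem_product.mpr ⟨hx, hy⟩, hxy⟩, rfl⟩
    calc (2:ℝ) = (2 / |φ x - φ y|) * |φ x - φ y| := by field_simp
    _ ≤ a * |φ x - φ y| := by
        exact mul_le_mul_of_nonneg_right hle hg0.le
  -- choose the shift `bb`
  set U : Finset ℝ := insert 0 (S.image fun x => (K + 2 : ℝ) - a * φ x) with hU
  set bb : ℝ := U.max' ⟨0, Finset.mem_insert_self _ _⟩ with hbb
  have hshift : ∀ x ∈ S, (K:ℝ) + 2 ≤ a * φ x + bb := by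
    intro x hx
    have : (K + 2 : ℝ) - a * φ x ≤ bb := by
      refine Finset.le_max' _ _ (Finset.mem_insert_of_mem ?_)
      exact Finset.mem_image.mpr ⟨x, hx, rfl⟩
    linarith
  -- enumerate X
  set Lst : List (Mat d0 t) := S.toList with hLst
  set n : ℕ := Lst.length with hn
  have hnd : Lst.Nodup := S.nodup_toList
  have hgetinj : Function.Injective Lst.get := List.nodup_iff_injective_get.mp hnd
  have hgetS : ∀ i : Fin n, Lst.get i ∈ S := fun i =>
    Finset.mem_toList.mp (Lst.get_mem _)
  set i0 : Fin d0 := ⟨0, hd0⟩ with hi0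
  set j0 : Fin t := ⟨0, lt_of_lt_of_le (Nat.succ_pos K) ht⟩ with hj0
  set uf : Fin n → ℝ := fun i => a * φ (Lst.get i) + bb with huf
  set vf : Fin n → ℝ := fun i => ((h (Lst.get i)).val : ℝ) with hvf
  have hgap : ∀ i j : Fin n, i ≠ j → 2 ≤ |uf i - uf j| := by
    intro i j hij
    have hne : Lst.get i ≠ Lst.get j := fun hh => hij (hgetinj hh)
    have := hagap _ (hgetS i) _ (hgetS j) hne
    have heq : |uf i - uf j| = a * |φ (Lst.get i) - φ (Lst.get j)| := by
      rw [show uf i - uf j = a * (φ (Lst.get i) - φ (Lst.get j)) by simp [huf]; ring,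
        abs_mul, abs_of_pos ha0]
    linarith [heq ▸ this]
  have hlow : ∀ i j : Fin n, vf i + 2 ≤ uf j := by
    intro i j
    have h1 : vf i ≤ (K:ℝ) := by
      have := Nat.lt_succ_iff.mp (h (Lst.get i)).isLt
      exact_mod_cast Nat.cast_le.mpr this
    have := hshift _ (hgetS j)
    simp only [huf]
    linarith
  -- the blocks
  set B : Fin n → (Mat d0 t → Mat d0 t) := fun i => myBlock i0 (uf i) (vf i) with hB
  set F : Mat d0 t → Mat d0 t := fun x => Matrix.of fun _ _ => a * φ x + bb with hF
  refine ⟨n, iterComp n B ∘ F, ⟨B, F, fun i => ?_, ?_, rfl⟩,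
    fun H k => readout (fun i => if i = i0 then 1 else 0)
      (fun j => if j = j0 then (k.val:ℝ) else 0) 0 (-((k.val:ℝ))^2/2) H,
    ⟨fun k i => if i = i0 then 1 else 0, fun k j => if j = j0 then (k.val:ℝ) else 0,
      fun _ _ => 0, fun k => -((k.val:ℝ))^2/2, rfl⟩, ?_⟩
  · exact ⟨fun _ => 0, fun _ => 0, fun _ => 0, fun _ => 0,
      myW1 i0, myW2 i0 (uf i) (vf i), myb1 (uf i), 0, rfl⟩
  · refine ⟨{ toFun := fun x => Matrix.of fun _ _ => a * φ x
              map_add' := by intro x y; ext p q; simp [mul_add]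
              map_smul' := by intro c x; ext p q; simp; ring },
      Matrix.of fun _ _ => bb, ?_⟩
    funext x
    ext p q
    simp [hF]
  · intro x hx k hk
    have hxS : x ∈ S := hX.mem_toFinset.mpr hx
    obtain ⟨i, hi⟩ : ∃ i, Lst.get i = x := List.mem_iff_get.mp (Finset.mem_toList.mpr hxS)
    have hFx : F x i0 j0 = uf i := by
      show _ = a * φ (Lst.get i) + bb
      rw [hi]; rfl
    have hkey : (iterComp n B (F x)) i0 j0 = vf i := by
      rw [iterComp_entry i0 j0 n B (fun i => glayer (uf i) (vf i))
        (fun i H => myBlock_entry i0 j0 _ _ H), hFx]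
      exact iterComp_glayer_hits n uf vf hgap hlow i
    simp only [Function.comp_apply]
    rw [readout_eval, readout_eval, hkey]
    have hv : vf i = ((h x).val : ℝ) := by
      show ((h (Lst.get i)).val : ℝ) = _
      rw [hi]
    rw [hv]
    set p : ℝ := ((h x).val : ℝ) with hp
    set q : ℝ := ((k).val : ℝ) with hq
    have hpq : q ≠ p := by
      simp only [hp, hq, Ne, Nat.cast_inj]
      exact fun hh => hk (Fin.ext hh)
    have h2 : (0:ℝ) < (p - q)^2 := by
      have : p - q ≠ 0 := sub_ne_zero.mpr (Ne.symm hpq)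
      positivity
    nlinarith [h2]
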